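/- arXiv:1111.3705 — 2 statements merged into one kernel-verified Lean document; each statement's English description precedes it below -/
import Mathlib

section
/- Let ρ: G → GL_d(ℂ) be a representation with character χ_ρ. Let T(q) be the (n+1)×(n+1) matrix over ℂ[[q]] with entries T(q)^i_j = Σ_{m≥0} q^m · ⟨(χ_ρ)^m·χ_i, χ_j⟩ (the Clebsch–Gordan series of the tensor powers of ρ). Then for any 1 ≤ k ≤ n+1 and strictly increasing tuples 0 ≤ i_1 < … < i_k ≤ n, 0 ≤ j_1 < … < j_k ≤ n, the corresponding k×k minor of T(q) equals, in ℂ[[q]], (1/|G|^k) · Σ_{0 ≤ p_1 < … < p_k ≤ n} det(χ_{i_a}(g_{p_b})) · conj( det(χ_{j_a}(g_{p_b})) ) · Π_{m=1}^k |C_{p_m}|·(1 − q·χ_ρ(g_{p_m}))^{-1}. -/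
open CategoryTheory
open Finset Equiv Matrix
open scoped Classical

/-- Inner product of class functions: `⟨a, b⟩ = (1/|G|) Σ_{g∈G} a(g)·conj(b(g))`. -/
noncomputable def cgIP {G : Type*} [Group G] [Fintype G] (a b : G → ℂ) : ℂ :=
  (Fintype.card G : ℂ)⁻¹ * ∑ x : G, a x * (starRingEnd ℂ) (b x)

/-- The size of the conjugacy class of `x`. -/
noncomputable def classCard {G : Type*} [Group G] (x : G) : ℕ :=
  Nat.card {y : G // IsConj x y}


section CauchyBinetAux

variable {R : Type*} [CommRing R]



variable {R : Type*} [CommRing R]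


lemma cb_aux {k N : ℕ} (A : Matrix (Fin k) (Fin N) R) (B : Matrix (Fin N) (Fin k) R)
    {p : Fin k → Fin N} (H : ¬Function.Injective p) :
    (∑ σ : Perm (Fin k), ((Equiv.Perm.sign σ : ℤ) : R) * ∏ x, A (σ x) (p x) * B (p x) x) = 0 := by
  obtain ⟨i, j, hpij, hij⟩ : ∃ i j, p i = p j ∧ i ≠ j := by
    rw [Function.Injective] at H
    push_neg at H
    obtain ⟨i, j, h1, h2⟩ := H
    exact ⟨i, j, h1, h2⟩
  exact
    sum_involution (fun σ _ => σ * Equiv.swap i j)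
      (fun σ _ => by
        have : (∏ x, A (σ x) (p x)) = ∏ x, A ((σ * Equiv.swap i j) x) (p x) :=
          Fintype.prod_equiv (Equiv.swap i j) _ _ (by simp [Equiv.apply_swap_eq_self hpij])
        simp [this, Equiv.Perm.sign_swap hij, -Equiv.Perm.sign_swap', prod_mul_distrib])
      (fun σ _ _ => (not_congr Equiv.mul_swap_eq_iff).mpr hij) (fun _ _ => mem_univ _)
      fun σ _ => Equiv.mul_swap_involutive i j σ

lemma cb_expand {k N : ℕ} (A : Matrix (Fin k) (Fin N) R) (B : Matrix (Fin N) (Fin k) R) :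
    det (A * B) = ∑ p : Fin k → Fin N, ∑ σ : Perm (Fin k),
      ((Equiv.Perm.sign σ : ℤ) : R) * ∏ i, A (σ i) (p i) * B (p i) i := by
  simp only [det_apply', mul_apply, prod_univ_sum, mul_sum, Fintype.piFinset_univ]
  rw [Finset.sum_comm]

lemma cb_inj {k N : ℕ} (A : Matrix (Fin k) (Fin N) R) (B : Matrix (Fin N) (Fin k) R) :
    det (A * B) = ∑ p ∈ univ.filter (fun p : Fin k → Fin N => Function.Injective p),
      ∑ σ : Perm (Fin k), ((Equiv.Perm.sign σ : ℤ) : R) * ∏ i, A (σ i) (p i) * B (p i) i := by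
  rw [cb_expand]
  refine (sum_subset (filter_subset _ _) fun f _ hinj => cb_aux A B ?_).symm
  simpa only [true_and, mem_filter, mem_univ] using hinj

lemma strictMono_eq_of_image_eq {k N : ℕ} {P P' : Fin k → Fin N}
    (hP : StrictMono P) (hP' : StrictMono P')
    (h : Finset.image P univ = Finset.image P' univ) : P = P' := by
  have hc : (Finset.image P univ).card = k := by
    rw [Finset.card_image_of_injective _ hP.injective, card_univ, Fintype.card_fin]
  have h1 : P = (Finset.image P univ).orderEmbOfFin hc :=
    Finset.orderEmbOfFin_unique hc (fun x => Finset.mem_image_of_mem _ (mem_univ x)) hP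
  have h2 : P' = (Finset.image P univ).orderEmbOfFin hc :=
    Finset.orderEmbOfFin_unique hc (fun x => h ▸ Finset.mem_image_of_mem _ (mem_univ x)) hP'
  rw [h1, h2]

lemma sum_injective_eq {M : Type*} [AddCommMonoid M] {k N : ℕ}
    (f : (Fin k → Fin N) → M) :
    ∑ p ∈ univ.filter (fun p : Fin k → Fin N => Function.Injective p), f p
      = ∑ P ∈ univ.filter (fun P : Fin k → Fin N => StrictMono P),
          ∑ τ : Perm (Fin k), f (P ∘ τ) := by
  rw [← Finset.sum_product']
  refine (Finset.sum_bij (fun x _ => x.1 ∘ x.2) ?_ ?_ ?_ ?_).symm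
  · rintro ⟨P, τ⟩ h
    simp only [mem_product, mem_filter, mem_univ, true_and] at h
    simp only [mem_filter, mem_univ, true_and]
    exact h.1.injective.comp τ.injective
  · rintro ⟨P, τ⟩ hPτ ⟨P', τ'⟩ hPτ' hee
    simp only [mem_product, mem_filter, mem_univ, true_and, and_true] at hPτ hPτ'
    dsimp only at hee
    have himg : Finset.image P univ = Finset.image P' univ := by
      have h1 : Finset.image (P ∘ τ) univ = Finset.image P univ := by
        rw [← Finset.image_image]
        congr 1
        exact Finset.image_univ_equiv τ
      have h2 : Finset.image (P' ∘ τ') univ = Finset.image P' univ := by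
        rw [← Finset.image_image]
        congr 1
        exact Finset.image_univ_equiv τ'
      rw [← h1, ← h2, hee]
    have hPP : P = P' := strictMono_eq_of_image_eq hPτ hPτ' himg
    subst hPP
    have : τ = τ' := by
      ext i
      exact Fin.val_congr (hPτ.injective (congrFun hee i))
    simp [this]
  · intro p hp
    simp only [mem_filter, mem_univ, true_and] at hp
    set s := Finset.image p univ with hs
    have hc : s.card = k := by
      rw [hs, Finset.card_image_of_injective _ hp, card_univ, Fintype.card_fin]
    have hmem : ∀ i, p i ∈ s := fun i => Finset.mem_image_of_mem _ (mem_univ i)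
    set t : Fin k → Fin k := fun i => (s.orderIsoOfFin hc).symm ⟨p i, hmem i⟩ with ht
    have htinj : Function.Injective t := by
      intro a b hab
      apply hp
      have := congrArg (fun z => ((s.orderIsoOfFin hc) z : Fin N)) hab
      simpa [ht] using this
    have htbij : Function.Bijective t := Finite.injective_iff_bijective.mp htinj
    refine ⟨⟨s.orderEmbOfFin hc, Equiv.ofBijective t htbij⟩, ?_, ?_⟩
    · simp only [mem_product, mem_filter, mem_univ, true_and]
      exact ⟨(s.orderEmbOfFin hc).strictMono, trivial⟩
    · funext i
      show s.orderEmbOfFin hc (t i) = p i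
      rw [ht]
      exact congrArg Subtype.val ((s.orderIsoOfFin hc).apply_symm_apply ⟨p i, hmem i⟩)
  · intros; rfl

lemma det_mul_core {k : ℕ} (M N : Matrix (Fin k) (Fin k) R) :
    (∑ τ : Perm (Fin k), ∑ σ : Perm (Fin k), ((Equiv.Perm.sign σ : ℤ) : R) * ∏ i, M (σ i) (τ i) * N (τ i) i)
      = det M * det N := by
  have h1 : (∑ τ : Perm (Fin k), ∑ σ : Perm (Fin k), ((Equiv.Perm.sign σ : ℤ) : R) * ∏ i, M (σ i) (τ i) * N (τ i) i)
      = ∑ p ∈ univ.filter (fun p : Fin k → Fin k => Function.Injective p),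
          ∑ σ : Perm (Fin k), ((Equiv.Perm.sign σ : ℤ) : R) * ∏ i, M (σ i) (p i) * N (p i) i := by
    refine (Finset.sum_bij (fun (p : Fin k → Fin k)
        (h : p ∈ univ.filter fun p : Fin k → Fin k => Function.Injective p) =>
        Equiv.ofBijective p (Finite.injective_iff_bijective.mp (mem_filter.1 h).2))
      (fun _ _ => mem_univ _) ?_ ?_ ?_).symm
    · intro a ha b hb h
      injection h
    · intro b _
      refine ⟨b, mem_filter.2 ⟨mem_univ _, b.injective⟩, ?_⟩
      exact Equiv.coe_fn_injective rfl
    · intros; rfl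
  rw [h1, ← cb_inj M N, det_mul]

lemma cauchy_binet {k N : ℕ} (A : Matrix (Fin k) (Fin N) R) (B : Matrix (Fin N) (Fin k) R) :
    det (A * B) = ∑ P ∈ univ.filter (fun P : Fin k → Fin N => StrictMono P),
      det (A.submatrix id P) * det (B.submatrix P id) := by
  rw [cb_inj, sum_injective_eq (fun p => ∑ σ : Perm (Fin k), ((Equiv.Perm.sign σ : ℤ) : R) * ∏ i, A (σ i) (p i) * B (p i) i)]
  exact Finset.sum_congr rfl fun P _ => det_mul_core (A.submatrix id P) (B.submatrix P id)

lemma invGeom (c : ℂ) :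
    ((1 : PowerSeries ℂ) - PowerSeries.X * PowerSeries.C c)⁻¹ =
      PowerSeries.mk fun m => c ^ m := by
  rw [eq_comm, PowerSeries.eq_inv_iff_mul_eq_one]
  · ext m
    rw [mul_sub, mul_one]
    cases m with
    | zero => simp
    | succ m =>
      rw [map_sub, ← mul_assoc, PowerSeries.coeff_mul_C, PowerSeries.coeff_succ_mul_X]
      simp [pow_succ]
  · simp

lemma sum_classes {G : Type} [Group G] [Fintype G] {n : ℕ}
    (g : Fin (n + 1) → G) (hg : ∀ x : G, ∃! k : Fin (n + 1), IsConj (g k) x)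
    (f : G → ℂ) (hf : ∀ (k : Fin (n + 1)) (x : G), IsConj (g k) x → f x = f (g k)) :
    ∑ x : G, f x = ∑ p : Fin (n + 1), (classCard (g p) : ℂ) * f (g p) := by
  have key : ∀ x : G, f x = ∑ p : Fin (n + 1), if IsConj (g p) x then f x else 0 := by
    intro x
    obtain ⟨p, hp, hup⟩ := hg x
    rw [Finset.sum_eq_single p (fun q _ hq => if_neg fun hc => hq (hup q hc)) (by simp)]
    rw [if_pos hp]
  calc ∑ x : G, f x = ∑ x : G, ∑ p : Fin (n + 1), if IsConj (g p) x then f x else 0 :=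
        Finset.sum_congr rfl fun x _ => key x
    _ = ∑ p : Fin (n + 1), ∑ x : G, if IsConj (g p) x then f x else 0 := Finset.sum_comm
    _ = ∑ p : Fin (n + 1), (classCard (g p) : ℂ) * f (g p) := by
        refine Finset.sum_congr rfl fun p _ => ?_
        rw [← Finset.sum_filter]
        have : ∀ x ∈ univ.filter (fun x => IsConj (g p) x), f x = f (g p) := by
          intro x hx
          exact hf p x (mem_filter.1 hx).2
        rw [Finset.sum_congr rfl this, Finset.sum_const, nsmul_eq_mul]
        congr 1
        rw [classCard, Nat.card_eq_fintype_card, Fintype.card_subtype]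

end CauchyBinetAux

theorem stmt4 {G : Type} [Group G] [Fintype G] {n : ℕ}
    (g : Fin (n + 1) → G) (hg1 : g 0 = 1)
    (hg : ∀ x : G, ∃! k : Fin (n + 1), IsConj (g k) x)
    (R : Fin (n + 1) → FDRep ℂ G)
    (hsimple : ∀ i, Simple (R i))
    (htriv : ∀ x : G, (R 0).character x = 1)
    (hdist : ∀ i j, i ≠ j → ¬ Nonempty (R i ≅ R j))
    {d : ℕ} (ρ : G →* Matrix.GeneralLinearGroup (Fin d) ℂ)
    (χρ : G → ℂ) (hχρ : ∀ s, χρ s = Matrix.trace (ρ s : Matrix (Fin d) (Fin d) ℂ))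
    (T : Matrix (Fin (n + 1)) (Fin (n + 1)) (PowerSeries ℂ))
    (hT : ∀ i j, T i j =
      PowerSeries.mk fun m => cgIP (fun s => χρ s ^ m * (R i).character s) ((R j).character))
    (k : ℕ) (hk1 : 1 ≤ k) (hk2 : k ≤ n + 1)
    (I J : Fin k → Fin (n + 1)) (hI : StrictMono I) (hJ : StrictMono J) :
    (T.submatrix I J).det =
      PowerSeries.C ((Fintype.card G : ℂ)⁻¹ ^ k) *
        ∑ P ∈ Finset.univ.filter (fun P : Fin k → Fin (n + 1) => StrictMono P),
          PowerSeries.C (Matrix.of fun a b : Fin k => (R (I a)).character (g (P b))).det *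
            PowerSeries.C ((starRingEnd ℂ)
              (Matrix.of fun a b : Fin k => (R (J a)).character (g (P b))).det) *
            ∏ m : Fin k, ((classCard (g (P m)) : PowerSeries ℂ) *
              ((1 : PowerSeries ℂ) - PowerSeries.X * PowerSeries.C (χρ (g (P m))))⁻¹) := by
  -- χρ is a class function
  have hχcl : ∀ (c x : G), χρ (c * x * c⁻¹) = χρ x := by
    intro c x
    rw [hχρ, hχρ, _root_.map_mul, _root_.map_mul, map_inv]
    exact Matrix.trace_units_conj (ρ c) (ρ x : Matrix (Fin d) (Fin d) ℂ)
  have hcharcl : ∀ (i : Fin (n + 1)) (c x : G),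
      (R i).character (c * x * c⁻¹) = (R i).character x := fun i c x =>
    FDRep.char_conj (R i) x c
  -- factor T's submatrix as a product
  set A : Matrix (Fin k) (Fin (n + 1)) (PowerSeries ℂ) :=
    Matrix.of fun a p => PowerSeries.C ((R (I a)).character (g p)) with hA
  set B : Matrix (Fin (n + 1)) (Fin k) (PowerSeries ℂ) :=
    Matrix.of fun p b =>
      PowerSeries.C ((Fintype.card G : ℂ)⁻¹ * (classCard (g p) : ℂ) *
        (starRingEnd ℂ) ((R (J b)).character (g p))) *
      PowerSeries.mk (fun m => χρ (g p) ^ m) with hB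
  have key : T.submatrix I J = A * B := by
    ext a b m
    rw [Matrix.submatrix_apply, hT, Matrix.mul_apply, PowerSeries.coeff_mk, map_sum]
    have hterm : ∀ p : Fin (n + 1), (PowerSeries.coeff m) (A a p * B p b) =
        ((R (I a)).character (g p)) *
          ((Fintype.card G : ℂ)⁻¹ * (classCard (g p) : ℂ) *
            (starRingEnd ℂ) ((R (J b)).character (g p))) * χρ (g p) ^ m := by
      intro p
      rw [hA, hB]
      simp only [Matrix.of_apply, ← mul_assoc, ← _root_.map_mul, PowerSeries.coeff_C_mul,
        PowerSeries.coeff_mk]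
    rw [Finset.sum_congr rfl fun p _ => hterm p, cgIP]
    rw [sum_classes g hg (fun x => χρ x ^ m * (R (I a)).character x *
        (starRingEnd ℂ) ((R (J b)).character x)) ?_]
    · rw [Finset.mul_sum]
      refine Finset.sum_congr rfl fun p _ => ?_
      ring
    · intro q x hconj
      obtain ⟨c, hc⟩ := isConj_iff.mp hconj
      rw [← hc]
      simp only [hχcl, hcharcl]
  rw [key, cauchy_binet, Finset.mul_sum]
  refine Finset.sum_congr rfl fun P _ => ?_
  -- determinant of the A part
  have hdA : (A.submatrix id P).det =
      PowerSeries.C (Matrix.of fun a b : Fin k => (R (I a)).character (g (P b))).det := by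
    rw [RingHom.map_det]
    congr 1
  -- determinant of the B part
  have hdB : (B.submatrix P id).det =
      (∏ a : Fin k, (PowerSeries.C ((Fintype.card G : ℂ)⁻¹ * (classCard (g (P a)) : ℂ)) *
        PowerSeries.mk (fun m => χρ (g (P a)) ^ m))) *
      PowerSeries.C ((starRingEnd ℂ)
        (Matrix.of fun a b : Fin k => (R (J a)).character (g (P b))).det) := by
    have h1 : B.submatrix P id = Matrix.of fun a b =>
        (PowerSeries.C ((Fintype.card G : ℂ)⁻¹ * (classCard (g (P a)) : ℂ)) *
          PowerSeries.mk (fun m => χρ (g (P a)) ^ m)) *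
        (PowerSeries.C ((starRingEnd ℂ) ((R (J b)).character (g (P a))))) := by
      refine Matrix.ext fun a b => ?_
      rw [hB]
      simp only [Matrix.submatrix_apply, Matrix.of_apply, _root_.map_mul, id_eq]
      ring
    have hmc := Matrix.det_mul_column (fun a : Fin k => PowerSeries.C ((Fintype.card G : ℂ)⁻¹ * (classCard (g (P a)) : ℂ)) *
      PowerSeries.mk (fun m => χρ (g (P a)) ^ m))
      (Matrix.of fun a b : Fin k => PowerSeries.C ((starRingEnd ℂ) ((R (J b)).character (g (P a)))))
    simp only [Matrix.of_apply] at hmc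
    rw [h1, hmc]
    congr 1
    rw [RingHom.map_det, RingHom.map_det, ← Matrix.det_transpose]
    congr 1
  rw [hdA, hdB]
  -- clean up the RHS
  have hcast : ∀ p : Fin (n + 1), ((classCard (g p) : ℕ) : PowerSeries ℂ) =
      PowerSeries.C ((classCard (g p) : ℕ) : ℂ) := by
    intro p
    rw [map_natCast]
  simp only [invGeom, hcast, _root_.map_mul, _root_.map_pow, Finset.prod_mul_distrib,
    Finset.prod_const, Finset.card_univ, Fintype.card_fin]
  ring
end

section
/- Assume n ≥ 1 and let ρ: G → GL_d(ℂ) (d ≥ 1) be a representation whose image acts freely, i.e., det(1 − ρ(g)) ≠ 0 for every g ≠ 1 in G. Let C̃ be the Euclidean Cartan matrix of ρ: the n×n complex matrix with entries C̃^i_j = (1/|G|) Σ_{k=1}^n |C_k|·χ_i(g_k)·conj(χ_j(g_k))·det(1 − ρ(g_k)) for 1 ≤ i, j ≤ n. Then C̃ is invertible, and its inverse has entries (C̃^{-1})^i_j = (1/|G|) Σ_{k=1}^n |C_k|·(χ_i(g_k) − d_i)·( conj(χ_j(g_k)) − d_j ) / det(1 − ρ(g_k)). -/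
open CategoryTheory
open scoped Classical

open Polynomial Module in
lemma conj_trace_eq_trace_pow {V : Type*} [AddCommGroup V] [Module ℂ V] [FiniteDimensional ℂ V]
    (f : Module.End ℂ V) (m : ℕ) (hm : 0 < m) (hf : f ^ m = 1) :
    (starRingEnd ℂ) (LinearMap.trace ℂ V f) = LinearMap.trace ℂ V (f ^ (m - 1)) := by
  have haev : Polynomial.aeval f ((X : ℂ[X]) ^ m - C 1) = 0 := by
    simp [map_pow, hf]
  have hsq : Squarefree ((X : ℂ[X]) ^ m - C 1) :=
    (Polynomial.separable_X_pow_sub_C (1 : ℂ) (Nat.cast_ne_zero.mpr hm.ne') one_ne_zero).squarefree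
  have hss : f.IsSemisimple := Module.End.isSemisimple_of_squarefree_aeval_eq_zero hsq haev
  have htop : ⨆ μ : ℂ, f.eigenspace μ = ⊤ := by
    have h1 := Module.End.iSup_maxGenEigenspace_eq_top f
    simpa [hss.isFinitelySemisimple.maxGenEigenspace_eq_eigenspace] using h1
  have hind : iSupIndep f.eigenspace := f.eigenspaces_iSupIndep
  have hint : DirectSum.IsInternal f.eigenspace :=
    (DirectSum.isInternal_submodule_iff_iSupIndep_and_iSup_eq_top _).mpr ⟨hind, htop⟩
  have hfin : {μ : ℂ | f.eigenspace μ ≠ ⊥}.Finite :=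
    WellFoundedGT.finite_ne_bot_of_iSupIndep hind
  have hpow : ∀ (k : ℕ) (μ : ℂ) (x : V), x ∈ f.eigenspace μ → (f ^ k) x = μ ^ k • x := by
    intro k μ
    induction k with
    | zero => intro x _; simp
    | succ k ih =>
      intro x hx
      have hx' : f x = μ • x := Module.End.mem_eigenspace_iff.mp hx
      have : (f ^ (k + 1)) x = (f ^ k) (f x) := by
        rw [pow_succ]; rfl
      rw [this, hx', map_smul, ih x hx, smul_smul, pow_succ, mul_comm]
  have hmap : ∀ (k : ℕ) (μ : ℂ), Set.MapsTo (f ^ k) (f.eigenspace μ) (f.eigenspace μ) := by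
    intro k μ x hx
    have := hpow k μ x hx
    simpa [this] using Submodule.smul_mem _ (μ ^ k) hx
  have htr : ∀ k : ℕ, LinearMap.trace ℂ V (f ^ k) =
      ∑ μ ∈ hfin.toFinset, μ ^ k * (finrank ℂ (f.eigenspace μ) : ℂ) := by
    intro k
    rw [LinearMap.trace_eq_sum_trace_restrict' hint hfin (hmap k)]
    refine Finset.sum_congr rfl fun μ _ => ?_
    have hres : (f ^ k).restrict (hmap k μ) =
        (μ ^ k) • (LinearMap.id : f.eigenspace μ →ₗ[ℂ] f.eigenspace μ) := by
      ext x
      have := hpow k μ x.1 x.2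
      simp [LinearMap.restrict_apply, Subtype.ext_iff, this]
      exact this
    rw [hres, map_smul, LinearMap.trace_id]
    simp [mul_comm]
  have hroot : ∀ μ ∈ hfin.toFinset, μ ^ m = 1 := by
    intro μ hμ
    rw [Set.Finite.mem_toFinset] at hμ
    obtain ⟨x, hx, hx0⟩ := Submodule.exists_mem_ne_zero_of_ne_bot hμ
    have h1 : (f ^ m) x = μ ^ m • x := hpow m μ x hx
    rw [hf] at h1
    have h2 : (μ ^ m - 1) • x = 0 := by
      rw [sub_smul, one_smul, ← h1]; simp
    rcases smul_eq_zero.mp h2 with h | h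
    · exact sub_eq_zero.mp h
    · exact absurd h hx0
  have hconj : ∀ μ ∈ hfin.toFinset, (starRingEnd ℂ) μ = μ ^ (m - 1) := by
    intro μ hμ
    have hμm := hroot μ hμ
    have hμ0 : μ ≠ 0 := by
      intro h; rw [h] at hμm; simp [zero_pow hm.ne'] at hμm
    have habs : ‖μ‖ = 1 := by
      have : ‖μ‖ ^ m = 1 := by
        rw [← norm_pow, hμm, norm_one]
      rcases (pow_eq_one_iff_cases.mp this) with h | h | h
      · exact absurd h hm.ne'
      · exact h
      · nlinarith [norm_nonneg μ, h.1]
    have hns : Complex.normSq μ = 1 := by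
      have := Complex.sq_norm μ
      rw [habs] at this; simpa using this.symm
    have h1 : (starRingEnd ℂ) μ * μ = 1 := by
      rw [mul_comm, Complex.mul_conj, hns, Complex.ofReal_one]
    have h2 : μ ^ (m - 1) * μ = 1 := by
      rw [← pow_succ, Nat.sub_add_cancel hm, hμm]
    exact mul_right_cancel₀ hμ0 (h1.trans h2.symm)
  have ht1 := htr 1
  rw [pow_one] at ht1
  rw [ht1, htr (m - 1), map_sum]
  refine Finset.sum_congr rfl fun μ hμ => ?_
  rw [map_mul, pow_one, hconj μ hμ]
  simp

lemma char_conj_eq {G : Type} [Group G] [Fintype G] (V : FDRep ℂ G) (x : G) :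
    (starRingEnd ℂ) (V.character x) = V.character x⁻¹ := by
  have hm : 0 < orderOf x := orderOf_pos x
  have hf : (V.ρ x) ^ orderOf x = 1 := by
    rw [← map_pow, pow_orderOf_eq_one, map_one]
  have hinv : x⁻¹ = x ^ (orderOf x - 1) := by
    apply inv_eq_of_mul_eq_one_right
    rw [← pow_succ', Nat.sub_add_cancel hm, pow_orderOf_eq_one]
  show (starRingEnd ℂ) (LinearMap.trace ℂ V (V.ρ x)) = LinearMap.trace ℂ V (V.ρ x⁻¹)
  rw [hinv, map_pow]
  exact conj_trace_eq_trace_pow (V.ρ x) _ hm hf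

lemma char_isConj {G : Type} [Group G] (V : FDRep ℂ G) {x y : G} (h : IsConj x y) :
    V.character x = V.character y := by
  obtain ⟨c, hc⟩ := isConj_iff.mp h
  rw [← hc, FDRep.char_conj]

section Orth
variable {G : Type} [Group G] [Fintype G]

lemma orth_conj (V W : FDRep ℂ G) [Simple V] [Simple W] :
    ∑ x : G, V.character x * (starRingEnd ℂ) (W.character x) =
      if Nonempty (V ≅ W) then (Fintype.card G : ℂ) else 0 := by
  haveI : Invertible (Fintype.card G : ℂ) :=
    invertibleOfNonzero (Nat.cast_ne_zero.mpr Fintype.card_ne_zero)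
  have h := FDRep.char_orthonormal (k := ℂ) V W
  rw [Nat.card_eq_fintype_card, inv_mul_eq_iff_eq_mul₀ (Nat.cast_ne_zero.mpr Fintype.card_ne_zero)] at h
  have h2 : ∑ x : G, V.character x * W.character x⁻¹ =
      (Fintype.card G : ℂ) • (if Nonempty (V ≅ W) then (1 : ℂ) else 0) := by
    rw [h]; split_ifs <;> simp
  simp_rw [char_conj_eq]
  rw [h2]
  split_ifs <;> simp

lemma classCard_eq_filter (x : G) :
    classCard x = (Finset.univ.filter (fun y => IsConj x y)).card := by
  rw [classCard, Nat.card_eq_fintype_card, Fintype.card_subtype]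

lemma classCard_one : classCard (1 : G) = 1 := by
  rw [classCard_eq_filter]
  have : (Finset.univ.filter (fun y => IsConj (1 : G) y)) = {1} := by
    ext y
    simp [isConj_iff, eq_comm]
  rw [this, Finset.card_singleton]

lemma class_sum {n : ℕ} (g : Fin (n + 1) → G)
    (hg : ∀ x : G, ∃! k : Fin (n + 1), IsConj (g k) x)
    (f : G → ℂ) (hf : ∀ x y : G, IsConj x y → f x = f y) :
    ∑ k : Fin (n + 1), (classCard (g k) : ℂ) * f (g k) = ∑ x : G, f x := by
  classical
  have key : ∀ k : Fin (n + 1),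
      ∑ x ∈ Finset.univ.filter (fun x => IsConj (g k) x), f x
        = (classCard (g k) : ℂ) * f (g k) := by
    intro k
    rw [Finset.sum_congr rfl (fun x hx => (hf (g k) x (Finset.mem_filter.mp hx).2).symm),
      Finset.sum_const, classCard_eq_filter, nsmul_eq_mul]
  let φ : G → Fin (n + 1) := fun x => (hg x).exists.choose
  have hφ : ∀ x, IsConj (g (φ x)) x := fun x => (hg x).exists.choose_spec
  have hφ2 : ∀ x k, IsConj (g k) x → φ x = k := by
    intro x k hk
    exact ((hg x).unique (hφ x) hk)
  have hpart : ∀ k : Fin (n + 1),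
      (Finset.univ.filter (fun x => IsConj (g k) x)) =
        (Finset.univ.filter (fun x => φ x = k)) := by
    intro k
    ext x
    simp only [Finset.mem_filter, Finset.mem_univ, true_and]
    constructor
    · exact fun h => hφ2 x k h
    · rintro rfl; exact hφ x
  calc ∑ k : Fin (n + 1), (classCard (g k) : ℂ) * f (g k)
      = ∑ k : Fin (n + 1), ∑ x ∈ Finset.univ.filter (fun x => φ x = k), f x := by
        refine Finset.sum_congr rfl fun k _ => ?_
        rw [← hpart, key]
    _ = ∑ x : G, f x := by
        rw [Finset.sum_fiberwise]

end Orth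


lemma entry_calc {n : ℕ} (N di dj z : ℂ) (hN : N ≠ 0)
    (c f fj D w : Fin n → ℂ) (u v : Fin n → Fin n → ℂ)
    (hD : ∀ k, D k ≠ 0)
    (hkey : ∀ k m : Fin n, c k * ∑ l, u l k * (v l m - w l) = if k = m then N else 0)
    (hrowA : ∑ k, c k * (f k * fj k) = z - di * dj)
    (hrowB : ∑ k, c k * f k = -di) :
    ∑ l, (N⁻¹ * ∑ k, c k * f k * u l k * D k) *
      (N⁻¹ * ∑ m, c m * (v l m - w l) * (fj m - dj) / D m) = N⁻¹ * z := by
  calc ∑ l, (N⁻¹ * ∑ k, c k * f k * u l k * D k) *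
      (N⁻¹ * ∑ m, c m * (v l m - w l) * (fj m - dj) / D m)
      = ∑ l, ∑ k, ∑ m, N⁻¹ * N⁻¹ *
          ((c k * f k * u l k * D k) * (c m * (v l m - w l) * (fj m - dj) / D m)) := by
        refine Finset.sum_congr rfl fun l _ => ?_
        rw [show (N⁻¹ * ∑ k, c k * f k * u l k * D k) *
            (N⁻¹ * ∑ m, c m * (v l m - w l) * (fj m - dj) / D m) =
            N⁻¹ * N⁻¹ * ((∑ k, c k * f k * u l k * D k) *
              (∑ m, c m * (v l m - w l) * (fj m - dj) / D m)) from by ring,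
          Finset.sum_mul_sum, Finset.mul_sum]
        exact Finset.sum_congr rfl fun k _ => by rw [Finset.mul_sum]
    _ = ∑ k, ∑ m, (N⁻¹ * N⁻¹ * (f k * D k * (c m * (fj m - dj) / D m))) *
          (c k * ∑ l, u l k * (v l m - w l)) := by
        rw [Finset.sum_comm]
        refine Finset.sum_congr rfl fun k _ => ?_
        rw [Finset.sum_comm]
        refine Finset.sum_congr rfl fun m _ => ?_
        simp only [Finset.mul_sum]
        exact Finset.sum_congr rfl fun l _ => by ring
    _ = ∑ k, ∑ m, (N⁻¹ * N⁻¹ * (f k * D k * (c m * (fj m - dj) / D m))) *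
          (if k = m then N else 0) := by
        exact Finset.sum_congr rfl fun k _ => Finset.sum_congr rfl fun m _ => by rw [hkey]
    _ = ∑ k, (N⁻¹ * N⁻¹ * (f k * D k * (c k * (fj k - dj) / D k))) * N := by
        refine Finset.sum_congr rfl fun k _ => ?_
        simp only [mul_ite, mul_zero]
        rw [Finset.sum_ite_eq]
        simp
    _ = ∑ k, N⁻¹ * (c k * (f k * fj k) - dj * (c k * f k)) := by
        refine Finset.sum_congr rfl fun k _ => ?_
        field_simp [hD k, hN]
    _ = N⁻¹ * z := by
        rw [← Finset.mul_sum]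
        congr 1
        rw [Finset.sum_sub_distrib, hrowA, ← Finset.mul_sum, hrowB]
        ring

theorem stmt12 {G : Type} [Group G] [Fintype G] {n : ℕ} (hn : 1 ≤ n)
    (g : Fin (n + 1) → G) (hg1 : g 0 = 1)
    (hg : ∀ x : G, ∃! k : Fin (n + 1), IsConj (g k) x)
    (R : Fin (n + 1) → FDRep ℂ G)
    (hsimple : ∀ i, Simple (R i))
    (htriv : ∀ x : G, (R 0).character x = 1)
    (hdist : ∀ i j, i ≠ j → ¬ Nonempty (R i ≅ R j))
    {d : ℕ} (hd : 1 ≤ d) (ρ : G →* Matrix.GeneralLinearGroup (Fin d) ℂ)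
    -- the image of `ρ` acts freely
    (hfree : ∀ x : G, x ≠ 1 →
      Matrix.det ((1 : Matrix (Fin d) (Fin d) ℂ) - (ρ x : Matrix (Fin d) (Fin d) ℂ)) ≠ 0)
    -- `Ct` : the Euclidean Cartan matrix of `ρ`
    (Ct : Matrix (Fin n) (Fin n) ℂ)
    (hCt : ∀ i j : Fin n, Ct i j =
      (Fintype.card G : ℂ)⁻¹ *
        ∑ k : Fin n, (classCard (g k.succ) : ℂ) *
          (R i.succ).character (g k.succ) *
          (starRingEnd ℂ) ((R j.succ).character (g k.succ)) *
          Matrix.det ((1 : Matrix (Fin d) (Fin d) ℂ) -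
            (ρ (g k.succ) : Matrix (Fin d) (Fin d) ℂ)))
    -- `A` : the claimed inverse of `Ct`
    (A : Matrix (Fin n) (Fin n) ℂ)
    (hA : ∀ i j : Fin n, A i j =
      (Fintype.card G : ℂ)⁻¹ *
        ∑ k : Fin n, (classCard (g k.succ) : ℂ) *
          ((R i.succ).character (g k.succ) - (R i.succ).character 1) *
          ((starRingEnd ℂ) ((R j.succ).character (g k.succ)) - (R j.succ).character 1) /
          Matrix.det ((1 : Matrix (Fin d) (Fin d) ℂ) -
            (ρ (g k.succ) : Matrix (Fin d) (Fin d) ℂ))) :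
    Ct * A = 1 ∧ A * Ct = 1 := by
  classical
  set N : ℂ := (Fintype.card G : ℂ) with hNdef
  have hN : N ≠ 0 := Nat.cast_ne_zero.mpr Fintype.card_ne_zero
  have hiso : ∀ i j : Fin (n+1), Nonempty (R i ≅ R j) ↔ i = j := by
    intro i j
    constructor
    · intro h; by_contra hne; exact hdist i j hne h
    · rintro rfl; exact ⟨Iso.refl _⟩
  have horth : ∀ i j : Fin (n+1), ∑ x : G,
      (R i).character x * (starRingEnd ℂ) ((R j).character x) = if i = j then N else 0 := by
    intro i j
    haveI := hsimple i; haveI := hsimple j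
    rw [orth_conj (R i) (R j)]
    simp [hiso i j, hNdef]
  have hcfun : ∀ i j : Fin (n+1), ∀ x y : G, IsConj x y →
      (R i).character x * (starRingEnd ℂ) ((R j).character x) =
        (R i).character y * (starRingEnd ℂ) ((R j).character y) := by
    intro i j x y h; rw [char_isConj (R i) h, char_isConj (R j) h]
  have hclassOrth : ∀ i j : Fin (n+1),
      ∑ k : Fin (n+1), (classCard (g k) : ℂ) *
        ((R i).character (g k) * (starRingEnd ℂ) ((R j).character (g k))) =
        if i = j then N else 0 := by
    intro i j
    rw [class_sum g hg _ (hcfun i j), horth]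
  -- the two auxiliary matrices for column orthogonality
  set U : Matrix (Fin (n+1)) (Fin (n+1)) ℂ :=
    Matrix.of (fun i k => (R i).character (g k)) with hU
  set W : Matrix (Fin (n+1)) (Fin (n+1)) ℂ :=
    Matrix.of (fun k j => N⁻¹ * ((classCard (g k) : ℂ) *
      (starRingEnd ℂ) ((R j).character (g k)))) with hW
  have hUW : U * W = 1 := by
    ext i j
    rw [Matrix.mul_apply]
    have : ∀ k : Fin (n+1), U i k * W k j = N⁻¹ * ((classCard (g k) : ℂ) *
        ((R i).character (g k) * (starRingEnd ℂ) ((R j).character (g k)))) := by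
      intro k
      simp only [hU, hW, Matrix.of_apply]
      ring
    rw [Finset.sum_congr rfl (fun k _ => this k), ← Finset.mul_sum, hclassOrth i j,
      Matrix.one_apply]
    split_ifs with h
    · exact inv_mul_cancel₀ hN
    · exact mul_zero _
  have hWU : W * U = 1 := mul_eq_one_comm.mp hUW
  have hcol : ∀ k a : Fin (n+1), (classCard (g k) : ℂ) *
      ∑ i : Fin (n+1), (starRingEnd ℂ) ((R i).character (g k)) * (R i).character (g a) =
        if k = a then N else 0 := by
    intro k a
    have h1 : (W * U) k a = (1 : Matrix (Fin (n+1)) (Fin (n+1)) ℂ) k a := by rw [hWU]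
    rw [Matrix.mul_apply, Matrix.one_apply] at h1
    have h2 : ∀ i : Fin (n+1), W k i * U i a = N⁻¹ * ((classCard (g k) : ℂ) *
        ((starRingEnd ℂ) ((R i).character (g k)) * (R i).character (g a))) := by
      intro i
      simp only [hU, hW, Matrix.of_apply]
      ring
    rw [Finset.sum_congr rfl (fun i _ => h2 i), ← Finset.mul_sum, ← Finset.mul_sum] at h1
    have h3 := congrArg (fun z => N * z) h1
    rw [← mul_assoc, mul_inv_cancel₀ hN, one_mul] at h3
    rw [h3]
    split_ifs <;> simp
  -- basic facts
  have hgk1 : ∀ k : Fin n, g k.succ ≠ 1 := by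
    intro k hk
    have h0 : IsConj (g (0 : Fin (n+1))) (1 : G) := by rw [hg1]
    have h1 : IsConj (g k.succ) (1 : G) := by rw [hk]
    have := ((hg 1).unique h1 h0)
    exact Fin.succ_ne_zero k this
  have hD : ∀ k : Fin n, Matrix.det ((1 : Matrix (Fin d) (Fin d) ℂ) -
      (ρ (g k.succ) : Matrix (Fin d) (Fin d) ℂ)) ≠ 0 := fun k => hfree _ (hgk1 k)
  have hc1 : (classCard (g (0 : Fin (n+1))) : ℂ) = 1 := by rw [hg1, classCard_one]; norm_num
  have dconj : ∀ j : Fin (n+1), (starRingEnd ℂ) ((R j).character 1) = (R j).character 1 := by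
    intro j
    rw [char_conj_eq, inv_one]
  -- the key column-orthogonality sum over nontrivial characters
  have hkey : ∀ k m : Fin n, (classCard (g k.succ) : ℂ) *
      ∑ l : Fin n, (starRingEnd ℂ) ((R l.succ).character (g k.succ)) *
        ((R l.succ).character (g m.succ) - (R l.succ).character 1) =
      if k = m then N else 0 := by
    intro k m
    have hsplit : ∀ l : Fin (n+1), (starRingEnd ℂ) ((R l).character (g k.succ)) *
        ((R l).character (g m.succ) - (R l).character 1) =
        (starRingEnd ℂ) ((R l).character (g k.succ)) * (R l).character (g m.succ) -
        (starRingEnd ℂ) ((R l).character (g k.succ)) * (R l).character (g (0 : Fin (n+1))) := by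
      intro l
      rw [hg1]
      ring
    have hfull : ∑ l : Fin (n+1), (starRingEnd ℂ) ((R l).character (g k.succ)) *
        ((R l).character (g m.succ) - (R l).character 1) =
        ∑ l : Fin n, (starRingEnd ℂ) ((R l.succ).character (g k.succ)) *
          ((R l.succ).character (g m.succ) - (R l.succ).character 1) := by
      rw [Fin.sum_univ_succ]
      have h0 : (starRingEnd ℂ) ((R 0).character (g k.succ)) *
          ((R 0).character (g m.succ) - (R 0).character 1) = 0 := by
        simp only [htriv]
        ring
      rw [h0, zero_add]
    rw [← hfull]
    rw [Finset.sum_congr rfl (fun l _ => hsplit l), Finset.sum_sub_distrib, mul_sub]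
    rw [hcol k.succ m.succ, hcol k.succ 0]
    have h1 : (k.succ = m.succ) = (k = m) := by
      simp [Fin.succ_inj]
    have h2 : ¬ (k.succ = (0 : Fin (n+1))) := Fin.succ_ne_zero k
    rw [if_neg h2]
    simp [h1]
  -- row orthogonality restricted to nontrivial classes
  have hrowA : ∀ i j : Fin n, ∑ k : Fin n, (classCard (g k.succ) : ℂ) *
      ((R i.succ).character (g k.succ) * (starRingEnd ℂ) ((R j.succ).character (g k.succ))) =
      (if i = j then N else 0) - (R i.succ).character 1 * (R j.succ).character 1 := by
    intro i j
    have h := hclassOrth i.succ j.succ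
    rw [Fin.sum_univ_succ] at h
    rw [hc1, hg1, one_mul, dconj] at h
    simp only [Fin.succ_inj] at h
    linear_combination h
  have hrowB : ∀ i : Fin n, ∑ k : Fin n, (classCard (g k.succ) : ℂ) *
      (R i.succ).character (g k.succ) = -((R i.succ).character 1) := by
    intro i
    have h := hclassOrth i.succ 0
    rw [Fin.sum_univ_succ] at h
    rw [hc1, hg1, one_mul] at h
    have h2 : ¬ (i.succ = (0 : Fin (n+1))) := Fin.succ_ne_zero i
    rw [if_neg h2] at h
    have h3 : ∀ k : Fin n, (classCard (g k.succ) : ℂ) *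
        ((R i.succ).character (g k.succ) * (starRingEnd ℂ) ((R (0 : Fin (n+1))).character (g k.succ))) =
        (classCard (g k.succ) : ℂ) * (R i.succ).character (g k.succ) := by
      intro k
      rw [htriv]
      simp
    rw [Finset.sum_congr rfl (fun k _ => h3 k)] at h
    have h4 : (starRingEnd ℂ) ((R (0:Fin (n+1))).character 1) = 1 := by rw [htriv]; simp
    rw [h4] at h
    linear_combination h
  have hmain : Ct * A = 1 := by
    ext i j
    rw [Matrix.mul_apply]
    simp only [hCt, hA]
    rw [entry_calc N ((R i.succ).character 1) ((R j.succ).character 1)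
        (if i = j then N else 0) hN
        (fun k => (classCard (g k.succ) : ℂ))
        (fun k => (R i.succ).character (g k.succ))
        (fun k => (starRingEnd ℂ) ((R j.succ).character (g k.succ)))
        (fun k => Matrix.det ((1 : Matrix (Fin d) (Fin d) ℂ) -
          (ρ (g k.succ) : Matrix (Fin d) (Fin d) ℂ)))
        (fun l => (R l.succ).character 1)
        (fun l k => (starRingEnd ℂ) ((R l.succ).character (g k.succ)))
        (fun l m => (R l.succ).character (g m.succ))
        hD hkey (hrowA i j) (hrowB i)]
    rw [Matrix.one_apply]
    split_ifs with h
    · exact inv_mul_cancel₀ hN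
    · exact mul_zero _
  exact ⟨hmain, mul_eq_one_comm.mp hmain⟩
end
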